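/- Let f : U → ℂⁿ be holomorphic on an open neighbourhood U ⊆ ℂⁿ = ℂᵐ × ℂᵈ of a point (a, 0), of the form f(z′, z″) = (z′ + Σ_{j=1}^{d} z″_j G′_j(z), Σ_{j=1}^{d} z″_j G″_j(z)) with G′_j : U → ℂᵐ and G″_j : U → ℂᵈ holomorphic. If the d × d matrix G″(z′, 0) = (G″_1(z′,0), …, G″_d(z′,0)) is invertible at (a, 0), then the complex derivative Df(a, 0) is invertible; in particular f is a local biholomorphism near (a,0). -/

import Mathlib

open Finset Metric

/-- A holomorphic function on an open set in a proper complex normed space is Lipschitz on a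
small ball around any point, via the Cauchy estimate on complex lines and the mean value
inequality. -/
lemma aux_holo_lipschitz {E F : Type*} [NormedAddCommGroup E] [NormedSpace ℂ E] [ProperSpace E]
    [NormedAddCommGroup F] [NormedSpace ℂ F] [CompleteSpace F]
    {U : Set E} (hU : IsOpen U) {G : E → F} (hG : DifferentiableOn ℂ G U)
    {x₀ : E} (hx : x₀ ∈ U) :
    ∃ K : ℝ, 0 ≤ K ∧ ∃ ρ : ℝ, 0 < ρ ∧ Metric.ball x₀ ρ ⊆ U ∧
      ∀ z ∈ Metric.ball x₀ ρ, ∀ w ∈ Metric.ball x₀ ρ, ‖G z - G w‖ ≤ K * ‖z - w‖ := by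
  obtain ⟨r, hr, hrU⟩ := Metric.isOpen_iff.mp hU x₀ hx
  set R := r / 3 with hRdef
  have hR0 : 0 < R := by positivity
  have hsub : Metric.closedBall x₀ (2 * R) ⊆ U := by
    refine Set.Subset.trans ?_ hrU
    intro y hy
    rw [Metric.mem_closedBall] at hy
    rw [Metric.mem_ball]
    have : 2 * R < r := by rw [hRdef]; linarith
    linarith
  have hballU : Metric.ball x₀ R ⊆ U := by
    refine Set.Subset.trans ?_ hsub
    exact Metric.ball_subset_closedBall.trans (Metric.closedBall_subset_closedBall (by linarith))
  obtain ⟨M₀, hM₀⟩ := (isCompact_closedBall x₀ (2 * R)).exists_bound_of_continuousOn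
    ((hG.continuousOn).mono hsub)
  set M := max M₀ 0 with hMdef
  have hM0 : 0 ≤ M := le_max_right _ _
  have hM : ∀ y ∈ Metric.closedBall x₀ (2 * R), ‖G y‖ ≤ M :=
    fun y hy => (hM₀ y hy).trans (le_max_left _ _)
  refine ⟨M / R, by positivity, R, hR0, hballU, ?_⟩
  have hderiv : ∀ z ∈ Metric.ball x₀ R, ‖fderiv ℂ G z‖ ≤ M / R := by
    intro z hz
    refine ContinuousLinearMap.opNorm_le_bound _ (by positivity) fun v => ?_
    rcases eq_or_ne v 0 with rfl | hv
    · simp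
    have hv0 : 0 < ‖v‖ := norm_pos_iff.mpr hv
    set ρv := R / ‖v‖ with hρvdef
    have hρv0 : 0 < ρv := by positivity
    set φ : ℂ → F := fun t => G (z + t • v) with hφdef
    have hzR : ‖z - x₀‖ < R := by rw [← dist_eq_norm]; exact Metric.mem_ball.mp hz
    have hmem : ∀ t : ℂ, ‖t‖ ≤ ρv → z + t • v ∈ Metric.closedBall x₀ (2 * R) := by
      intro t ht
      rw [Metric.mem_closedBall, dist_eq_norm]
      have he : z + t • v - x₀ = z - x₀ + t • v := by abel
      rw [he]
      have h2 : ‖t • v‖ ≤ R := by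
        rw [norm_smul]
        calc ‖t‖ * ‖v‖ ≤ ρv * ‖v‖ := by gcongr
          _ = R := by
              rw [hρvdef, div_mul_cancel₀ _ (ne_of_gt hv0)]
      calc ‖z - x₀ + t • v‖ ≤ ‖z - x₀‖ + ‖t • v‖ := norm_add_le _ _
        _ ≤ 2 * R := by linarith
    have hmemU : ∀ t : ℂ, ‖t‖ ≤ ρv → z + t • v ∈ U := fun t ht => hsub (hmem t ht)
    have hdφ : DifferentiableOn ℂ φ (closure (Metric.ball (0 : ℂ) ρv)) := by
      rw [closure_ball (0 : ℂ) (ne_of_gt hρv0)]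
      intro t ht
      have ht' : ‖t‖ ≤ ρv := by
        rw [Metric.mem_closedBall, dist_zero_right] at ht; exact ht
      have hGd : DifferentiableAt ℂ G (z + t • v) :=
        hG.differentiableAt (hU.mem_nhds (hmemU t ht'))
      have : DifferentiableAt ℂ φ t :=
        hGd.comp t ((differentiableAt_id.smul_const v).const_add z)
      exact this.differentiableWithinAt
    have hDC : DiffContOnCl ℂ φ (Metric.ball 0 ρv) := hdφ.diffContOnCl
    have hsp : ∀ t ∈ Metric.sphere (0 : ℂ) ρv, ‖φ t‖ ≤ M := by
      intro t ht
      rw [Metric.mem_sphere, dist_zero_right] at ht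
      exact hM _ (hmem t ht.le)
    have hkey := Complex.norm_deriv_le_of_forall_mem_sphere_norm_le hρv0 hDC hsp
    have hGz : HasFDerivAt G (fderiv ℂ G z) z :=
      (hG.differentiableAt (hU.mem_nhds (hballU hz))).hasFDerivAt
    have hline : HasDerivAt (fun t : ℂ => z + t • v) v 0 := by
      simpa using ((hasDerivAt_id (0 : ℂ)).smul_const v).const_add z
    have hder : HasDerivAt φ (fderiv ℂ G z v) 0 := by
      have hGz' : HasFDerivAt G (fderiv ℂ G z) (z + (0 : ℂ) • v) := by simpa using hGz
      have := hGz'.comp_hasDerivAt (0 : ℂ) hline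
      simpa [hφdef, Function.comp_def] using this
    rw [hder.deriv] at hkey
    calc ‖fderiv ℂ G z v‖ ≤ M / ρv := hkey
      _ = M / R * ‖v‖ := by rw [hρvdef]; field_simp
  intro z hz w hw
  exact (convex_ball x₀ R).norm_image_sub_le_of_norm_fderiv_le
    (fun y hy => hG.differentiableAt (hU.mem_nhds (hballU hy))) hderiv hw hz

/-- Key per-term estimate: `z″_j • G(z) - w″_j • G(w) - (z″_j - w″_j) • G(a,0)` is small
compared to `‖z - w‖` on a small ball around `(a, 0)`. -/
lemma aux_term {m d : ℕ} {F : Type*} [NormedAddCommGroup F] [NormedSpace ℂ F] [CompleteSpace F]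
    {U : Set ((Fin m → ℂ) × (Fin d → ℂ))} (hU : IsOpen U)
    {G : (Fin m → ℂ) × (Fin d → ℂ) → F} (hG : DifferentiableOn ℂ G U)
    {a : Fin m → ℂ} (ha : ((a, (0 : Fin d → ℂ)) : (Fin m → ℂ) × (Fin d → ℂ)) ∈ U)
    (j : Fin d) {ε : ℝ} (hε : 0 < ε) :
    ∃ ρ : ℝ, 0 < ρ ∧ Metric.ball ((a, (0 : Fin d → ℂ)) : (Fin m → ℂ) × (Fin d → ℂ)) ρ ⊆ U ∧
      ∀ z ∈ Metric.ball ((a, (0 : Fin d → ℂ)) : (Fin m → ℂ) × (Fin d → ℂ)) ρ,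
      ∀ w ∈ Metric.ball ((a, (0 : Fin d → ℂ)) : (Fin m → ℂ) × (Fin d → ℂ)) ρ,
        ‖z.2 j • G z - w.2 j • G w - (z.2 j - w.2 j) • G (a, 0)‖ ≤ ε * ‖z - w‖ := by
  obtain ⟨K, hK0, ρ₁, hρ₁, hball₁, hlip⟩ := aux_holo_lipschitz hU hG ha
  have hcont : ContinuousAt G (a, 0) := (hG.differentiableAt (hU.mem_nhds ha)).continuousAt
  obtain ⟨ρ₂, hρ₂, hcl⟩ : ∃ ρ₂ > 0, ∀ z, dist z ((a, (0 : Fin d → ℂ)) :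
      (Fin m → ℂ) × (Fin d → ℂ)) < ρ₂ → ‖G z - G (a, 0)‖ ≤ ε / 2 := by
    obtain ⟨δ, hδ, h⟩ := Metric.continuousAt_iff.mp hcont (ε / 2) (by positivity)
    exact ⟨δ, hδ, fun z hz => by rw [← dist_eq_norm]; exact (h hz).le⟩
  refine ⟨min (min ρ₁ ρ₂) (ε / (2 * (K + 1))), by positivity, ?_, ?_⟩
  · exact (Metric.ball_subset_ball ((min_le_left _ _).trans (min_le_left _ _))).trans hball₁
  intro z hz w hw
  have hz₁ : z ∈ Metric.ball ((a, (0 : Fin d → ℂ)) : (Fin m → ℂ) × (Fin d → ℂ)) ρ₁ :=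
    Metric.ball_subset_ball ((min_le_left _ _).trans (min_le_left _ _)) hz
  have hw₁ : w ∈ Metric.ball ((a, (0 : Fin d → ℂ)) : (Fin m → ℂ) × (Fin d → ℂ)) ρ₁ :=
    Metric.ball_subset_ball ((min_le_left _ _).trans (min_le_left _ _)) hw
  have hz₂ : dist z ((a, (0 : Fin d → ℂ)) : (Fin m → ℂ) × (Fin d → ℂ)) < ρ₂ :=
    lt_of_lt_of_le (Metric.mem_ball.mp hz) ((min_le_left _ _).trans (min_le_right _ _))
  have hident : z.2 j • G z - w.2 j • G w - (z.2 j - w.2 j) • G (a, 0)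
      = (z.2 j - w.2 j) • (G z - G (a, 0)) + w.2 j • (G z - G w) := by
    simp only [sub_smul, smul_sub]; abel
  have h1 : ‖z.2 j - w.2 j‖ ≤ ‖z - w‖ := by
    have : z.2 j - w.2 j = (z - w).2 j := rfl
    rw [this]
    exact (norm_le_pi_norm (z - w).2 j).trans (norm_snd_le (z - w))
  have h2 : ‖G z - G (a, 0)‖ ≤ ε / 2 := hcl z hz₂
  have h3 : ‖w.2 j‖ ≤ ε / (2 * (K + 1)) := by
    have he : w.2 j = (w - ((a, (0 : Fin d → ℂ)) : (Fin m → ℂ) × (Fin d → ℂ))).2 j := by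
      simp
    rw [he]
    have := (norm_le_pi_norm (w - ((a, (0 : Fin d → ℂ)) :
      (Fin m → ℂ) × (Fin d → ℂ))).2 j).trans (norm_snd_le _)
    refine this.trans ?_
    rw [← dist_eq_norm]
    exact le_of_lt (lt_of_lt_of_le (Metric.mem_ball.mp hw) (min_le_right _ _))
  have h4 : ‖G z - G w‖ ≤ K * ‖z - w‖ := hlip z hz₁ w hw₁
  rw [hident]
  have hb1 : ‖(z.2 j - w.2 j) • (G z - G (a, 0))‖ ≤ ‖z - w‖ * (ε / 2) := by
    rw [norm_smul]
    exact mul_le_mul h1 h2 (norm_nonneg _) (norm_nonneg _)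
  have hb2 : ‖w.2 j • (G z - G w)‖ ≤ (ε / (2 * (K + 1))) * (K * ‖z - w‖) := by
    rw [norm_smul]
    exact mul_le_mul h3 h4 (norm_nonneg _) (by positivity)
  have hb3 : (ε / (2 * (K + 1))) * (K * ‖z - w‖) ≤ (ε / 2) * ‖z - w‖ := by
    rw [div_mul_eq_mul_div, div_le_iff₀ (by positivity : (0 : ℝ) < 2 * (K + 1))]
    have hnn : 0 ≤ ε * ‖z - w‖ := mul_nonneg hε.le (norm_nonneg _)
    nlinarith [norm_nonneg (z - w), hε.le, hK0]
  calc ‖(z.2 j - w.2 j) • (G z - G (a, 0)) + w.2 j • (G z - G w)‖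
      ≤ ‖(z.2 j - w.2 j) • (G z - G (a, 0))‖ + ‖w.2 j • (G z - G w)‖ := norm_add_le _ _
    _ ≤ ‖z - w‖ * (ε / 2) + (ε / 2) * ‖z - w‖ := by
        have := hb2.trans hb3
        linarith
    _ = ε * ‖z - w‖ := by ring

set_option maxHeartbeats 1200000

/-- for a holomorphic map of the normal form
`f (z′, z″) = (z′ + Σ_j z″_j G′_j (z), Σ_j z″_j G″_j (z))` on a neighbourhood of a
point `(a, 0) ∈ ℂᵐ × ℂᵈ`, if the `d × d` matrix `G″(a, 0)` is invertible (i.e. the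
linear map `w ↦ Σ_j w_j G″_j (a, 0)` is bijective), then the complex derivative
`Df (a, 0)` is invertible; in particular `f` is injective near `(a, 0)`. -/
theorem normal_form_local_biholomorphism {m d : ℕ}
    (U : Set ((Fin m → ℂ) × (Fin d → ℂ))) (hU : IsOpen U)
    (a : Fin m → ℂ) (ha : ((a, (0 : Fin d → ℂ)) : (Fin m → ℂ) × (Fin d → ℂ)) ∈ U)
    (f : (Fin m → ℂ) × (Fin d → ℂ) → (Fin m → ℂ) × (Fin d → ℂ))
    (G' : Fin d → (Fin m → ℂ) × (Fin d → ℂ) → (Fin m → ℂ))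
    (G'' : Fin d → (Fin m → ℂ) × (Fin d → ℂ) → (Fin d → ℂ))
    (hf : DifferentiableOn ℂ f U)
    (hG' : ∀ j, DifferentiableOn ℂ (G' j) U)
    (hG'' : ∀ j, DifferentiableOn ℂ (G'' j) U)
    (hform : ∀ z ∈ U, f z = (z.1 + ∑ j, z.2 j • G' j z, ∑ j, z.2 j • G'' j z))
    (hinv : Function.Bijective (fun w : Fin d → ℂ => ∑ j, w j • G'' j (a, 0))) :
    Function.Bijective (fderiv ℂ f (a, 0)) ∧
      ∃ s ∈ nhds ((a, (0 : Fin d → ℂ)) : (Fin m → ℂ) × (Fin d → ℂ)), Set.InjOn f s := by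
  classical
  set x₀ : (Fin m → ℂ) × (Fin d → ℂ) := (a, 0) with hx₀def
  set P : Fin d → ((Fin m → ℂ) × (Fin d → ℂ)) →L[ℂ] ℂ := fun j =>
    (ContinuousLinearMap.proj j).comp (ContinuousLinearMap.snd ℂ (Fin m → ℂ) (Fin d → ℂ))
    with hPdef
  set L1 : ((Fin m → ℂ) × (Fin d → ℂ)) →L[ℂ] (Fin m → ℂ) :=
    ContinuousLinearMap.fst ℂ (Fin m → ℂ) (Fin d → ℂ) +
      ∑ j, (P j).smulRight (G' j x₀) with hL1def
  set L2 : ((Fin m → ℂ) × (Fin d → ℂ)) →L[ℂ] (Fin d → ℂ) :=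
    ∑ j, (P j).smulRight (G'' j x₀) with hL2def
  set L : ((Fin m → ℂ) × (Fin d → ℂ)) →L[ℂ] ((Fin m → ℂ) × (Fin d → ℂ)) :=
    L1.prod L2 with hLdef
  have hPj : ∀ j, HasFDerivAt (fun z : (Fin m → ℂ) × (Fin d → ℂ) => z.2 j) (P j) x₀ :=
    fun j => (P j).hasFDerivAt
  have hx2 : ∀ j, x₀.2 j = 0 := fun j => rfl
  have hterm' : ∀ j, HasFDerivAt (fun z : (Fin m → ℂ) × (Fin d → ℂ) => z.2 j • G' j z)
      ((P j).smulRight (G' j x₀)) x₀ := by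
    intro j
    have hGj : HasFDerivAt (G' j) (fderiv ℂ (G' j) x₀) x₀ :=
      ((hG' j).differentiableAt (hU.mem_nhds ha)).hasFDerivAt
    have := (hPj j).smul hGj
    simpa [hx2 j] using this
  have hterm'' : ∀ j, HasFDerivAt (fun z : (Fin m → ℂ) × (Fin d → ℂ) => z.2 j • G'' j z)
      ((P j).smulRight (G'' j x₀)) x₀ := by
    intro j
    have hGj : HasFDerivAt (G'' j) (fderiv ℂ (G'' j) x₀) x₀ :=
      ((hG'' j).differentiableAt (hU.mem_nhds ha)).hasFDerivAt
    have := (hPj j).smul hGj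
    simpa [hx2 j] using this
  have h1 : HasFDerivAt (fun z : (Fin m → ℂ) × (Fin d → ℂ) =>
      z.1 + ∑ j, z.2 j • G' j z) L1 x₀ :=
    hasFDerivAt_fst.add (HasFDerivAt.fun_sum fun j _ => hterm' j)
  have h2 : HasFDerivAt (fun z : (Fin m → ℂ) × (Fin d → ℂ) =>
      ∑ j, z.2 j • G'' j z) L2 x₀ :=
    HasFDerivAt.fun_sum fun j _ => hterm'' j
  have hg : HasFDerivAt (fun z : (Fin m → ℂ) × (Fin d → ℂ) =>
      ((z.1 + ∑ j, z.2 j • G' j z, ∑ j, z.2 j • G'' j z) :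
        (Fin m → ℂ) × (Fin d → ℂ))) L x₀ := h1.prodMk h2
  have heq : f =ᶠ[nhds x₀] fun z : (Fin m → ℂ) × (Fin d → ℂ) =>
      ((z.1 + ∑ j, z.2 j • G' j z, ∑ j, z.2 j • G'' j z) : (Fin m → ℂ) × (Fin d → ℂ)) := by
    filter_upwards [hU.mem_nhds ha] with z hz using hform z hz
  have hfd : HasFDerivAt f L x₀ := hg.congr_of_eventuallyEq heq
  have hfderiv : fderiv ℂ f x₀ = L := hfd.fderiv
  have hLapp : ∀ v : (Fin m → ℂ) × (Fin d → ℂ),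
      L v = (v.1 + ∑ j, v.2 j • G' j x₀, ∑ j, v.2 j • G'' j x₀) := by
    intro v
    rw [hLdef, hL1def, hL2def]
    simp [ContinuousLinearMap.prod_apply, ContinuousLinearMap.add_apply,
      ContinuousLinearMap.sum_apply, ContinuousLinearMap.smulRight_apply,
      ContinuousLinearMap.coe_comp', hPdef]
  have hLinj : Function.Injective L := by
    intro u v huv
    rw [hLapp, hLapp] at huv
    have h2' : u.2 = v.2 := by
      apply hinv.injective
      simpa using congrArg Prod.snd huv
    have h1' : u.1 = v.1 := by
      have := congrArg Prod.fst huv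
      simp only [h2'] at this
      exact add_right_cancel this
    exact Prod.ext h1' h2'
  have hLbij : Function.Bijective L := by
    refine ⟨hLinj, ?_⟩
    exact (LinearMap.injective_iff_surjective
      (f := (L : ((Fin m → ℂ) × (Fin d → ℂ)) →ₗ[ℂ] ((Fin m → ℂ) × (Fin d → ℂ))))).mp hLinj
  refine ⟨by rw [hfderiv]; exact hLbij, ?_⟩
  -- Part 2: local injectivity via ApproximatesLinearOn
  let Leq : ((Fin m → ℂ) × (Fin d → ℂ)) ≃L[ℂ] ((Fin m → ℂ) × (Fin d → ℂ)) :=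
    (LinearEquiv.ofBijective (L : ((Fin m → ℂ) × (Fin d → ℂ)) →ₗ[ℂ]
      ((Fin m → ℂ) × (Fin d → ℂ))) hLbij).toContinuousLinearEquiv
  have hLeq : ((Leq : ((Fin m → ℂ) × (Fin d → ℂ)) →L[ℂ] ((Fin m → ℂ) × (Fin d → ℂ)))) = L := by
    exact ContinuousLinearMap.ext fun v => rfl
  set N : NNReal := ‖(Leq.symm : ((Fin m → ℂ) × (Fin d → ℂ)) →L[ℂ]
    ((Fin m → ℂ) × (Fin d → ℂ)))‖₊ with hNdef
  obtain ⟨c, hc0, hcN⟩ : ∃ c : NNReal, 0 < c ∧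
      (Subsingleton ((Fin m → ℂ) × (Fin d → ℂ)) ∨ c < N⁻¹) := by
    by_cases hE : Subsingleton ((Fin m → ℂ) × (Fin d → ℂ))
    · exact ⟨1, one_pos, Or.inl hE⟩
    · have hN0 : N ≠ 0 := by
        intro h
        apply hE
        have hs : (Leq.symm : ((Fin m → ℂ) × (Fin d → ℂ)) →L[ℂ]
            ((Fin m → ℂ) × (Fin d → ℂ))) = 0 := by
          rwa [hNdef, nnnorm_eq_zero] at h
        constructor
        intro x y
        have hx' : ∀ x : (Fin m → ℂ) × (Fin d → ℂ), Leq.symm x = 0 := fun x => by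
          have : Leq.symm x = ((Leq.symm : ((Fin m → ℂ) × (Fin d → ℂ)) →L[ℂ]
            ((Fin m → ℂ) × (Fin d → ℂ)))) x := rfl
          rw [this, hs]; rfl
        calc x = Leq (Leq.symm x) := (Leq.apply_symm_apply x).symm
          _ = Leq (Leq.symm y) := by rw [hx' x, hx' y]
          _ = y := Leq.apply_symm_apply y
      have hNi : 0 < N⁻¹ := by
        rw [pos_iff_ne_zero]
        simpa using hN0
      exact ⟨N⁻¹ / 2, by positivity, Or.inr (NNReal.half_lt_self (ne_of_gt hNi))⟩
  -- per-term small balls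
  have hεd : (0 : ℝ) < (c : ℝ) / (d + 1) := by
    have : (0 : ℝ) < (c : ℝ) := hc0
    positivity
  choose ρ' hρ'pos hball' hbound' using fun j : Fin d =>
    aux_term hU (hG' j) ha j hεd
  choose ρ'' hρ''pos hball'' hbound'' using fun j : Fin d =>
    aux_term hU (hG'' j) ha j hεd
  obtain ⟨ρ₀, hρ₀, hρ₀U⟩ := Metric.isOpen_iff.mp hU x₀ ha
  obtain ⟨ρ, hρpos, hρ0, hρj⟩ : ∃ ρ : ℝ, 0 < ρ ∧ ρ ≤ ρ₀ ∧ ∀ j, ρ ≤ ρ' j ∧ ρ ≤ ρ'' j := by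
    rcases isEmpty_or_nonempty (Fin d) with h | h
    · exact ⟨ρ₀, hρ₀, le_refl _, fun j => isEmptyElim j⟩
    · obtain ⟨j₀, -, hj₀⟩ := Finset.exists_min_image (Finset.univ : Finset (Fin d))
        (fun j => min (ρ' j) (ρ'' j)) ⟨Classical.arbitrary _, Finset.mem_univ _⟩
      refine ⟨min ρ₀ (min (ρ' j₀) (ρ'' j₀)), ?_, min_le_left _ _, fun j => ⟨?_, ?_⟩⟩
      · exact lt_min hρ₀ (lt_min (hρ'pos j₀) (hρ''pos j₀))
      · exact (min_le_right _ _).trans ((hj₀ j (Finset.mem_univ j)).trans (min_le_left _ _))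
      · exact (min_le_right _ _).trans ((hj₀ j (Finset.mem_univ j)).trans (min_le_right _ _))
  set s : Set ((Fin m → ℂ) × (Fin d → ℂ)) := Metric.ball x₀ ρ with hsdef
  have hsU : s ⊆ U := (Metric.ball_subset_ball hρ0).trans hρ₀U
  -- the approximation property
  have happrox : ApproximatesLinearOn f
      ((Leq : ((Fin m → ℂ) × (Fin d → ℂ)) →L[ℂ] ((Fin m → ℂ) × (Fin d → ℂ)))) s c := by
    rw [hLeq]
    intro z hz w hw
    have hfz := hform z (hsU hz)
    have hfw := hform w (hsU hw)
    have hLzw := hLapp (z - w)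
    have hcomp1 : (f z - f w - L (z - w)).1
        = ∑ j, (z.2 j • G' j z - w.2 j • G' j w - (z.2 j - w.2 j) • G' j x₀) := by
      rw [hfz, hfw, hLzw]
      simp only [Prod.fst_sub, Finset.sum_sub_distrib]
      abel
    have hcomp2 : (f z - f w - L (z - w)).2
        = ∑ j, (z.2 j • G'' j z - w.2 j • G'' j w - (z.2 j - w.2 j) • G'' j x₀) := by
      rw [hfz, hfw, hLzw]
      simp only [Prod.snd_sub, Finset.sum_sub_distrib]
      abel
    have hb1 : ‖(f z - f w - L (z - w)).1‖ ≤ (c : ℝ) * ‖z - w‖ := by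
      rw [hcomp1]
      calc ‖∑ j, (z.2 j • G' j z - w.2 j • G' j w - (z.2 j - w.2 j) • G' j x₀)‖
          ≤ ∑ j, ‖z.2 j • G' j z - w.2 j • G' j w - (z.2 j - w.2 j) • G' j x₀‖ :=
            norm_sum_le _ _
        _ ≤ ∑ _j : Fin d, ((c : ℝ) / (d + 1)) * ‖z - w‖ := by
            refine Finset.sum_le_sum fun j _ => ?_
            exact hbound' j z (Metric.ball_subset_ball (hρj j).1 hz)
              w (Metric.ball_subset_ball (hρj j).1 hw)
        _ = (d : ℝ) * (((c : ℝ) / (d + 1)) * ‖z - w‖) := by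
            simp [Finset.sum_const, nsmul_eq_mul]
        _ ≤ (c : ℝ) * ‖z - w‖ := by
            have hd1 : (0 : ℝ) < (d : ℝ) + 1 := by positivity
            rw [← mul_assoc]
            have : (d : ℝ) * ((c : ℝ) / (d + 1)) ≤ (c : ℝ) := by
              rw [mul_comm, div_mul_eq_mul_div, div_le_iff₀ hd1]
              nlinarith [NNReal.coe_nonneg c]
            exact mul_le_mul_of_nonneg_right this (norm_nonneg _)
    have hb2 : ‖(f z - f w - L (z - w)).2‖ ≤ (c : ℝ) * ‖z - w‖ := by
      rw [hcomp2]
      calc ‖∑ j, (z.2 j • G'' j z - w.2 j • G'' j w - (z.2 j - w.2 j) • G'' j x₀)‖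
          ≤ ∑ j, ‖z.2 j • G'' j z - w.2 j • G'' j w - (z.2 j - w.2 j) • G'' j x₀‖ :=
            norm_sum_le _ _
        _ ≤ ∑ _j : Fin d, ((c : ℝ) / (d + 1)) * ‖z - w‖ := by
            refine Finset.sum_le_sum fun j _ => ?_
            exact hbound'' j z (Metric.ball_subset_ball (hρj j).2 hz)
              w (Metric.ball_subset_ball (hρj j).2 hw)
        _ = (d : ℝ) * (((c : ℝ) / (d + 1)) * ‖z - w‖) := by
            simp [Finset.sum_const, nsmul_eq_mul]
        _ ≤ (c : ℝ) * ‖z - w‖ := by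
            have hd1 : (0 : ℝ) < (d : ℝ) + 1 := by positivity
            rw [← mul_assoc]
            have : (d : ℝ) * ((c : ℝ) / (d + 1)) ≤ (c : ℝ) := by
              rw [mul_comm, div_mul_eq_mul_div, div_le_iff₀ hd1]
              nlinarith [NNReal.coe_nonneg c]
            exact mul_le_mul_of_nonneg_right this (norm_nonneg _)
    calc ‖f z - f w - L (z - w)‖
        = max ‖(f z - f w - L (z - w)).1‖ ‖(f z - f w - L (z - w)).2‖ := Prod.norm_def _
      _ ≤ (c : ℝ) * ‖z - w‖ := max_le hb1 hb2
  have hinjOn : Set.InjOn f s := happrox.injOn hcN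
  exact ⟨s, Metric.ball_mem_nhds x₀ hρpos, hinjOn⟩
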